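/- Let (b_n)_{n∈ℤ} be a real sequence with b_n ≥ 0 for all n and ∑_{n∈ℤ} b_n^{3/2} < ∞. Let ψ_1, …, ψ_N ∈ ℓ²(ℤ) be an orthonormal family of eigenvectors of the discrete Schrödinger operator corresponding to negative eigenvalues −e_1, …, −e_N (e_j > 0), i.e. (D*D ψ_j)(n) − b_n ψ_j(n) = −e_j ψ_j(n) for all n. Set X = ( ∑_{n∈ℤ} ( ∑_{j=1}^N |ψ_j(n)|² )³ )^{1/3}. Then X³ − ( ∑_{n∈ℤ} b_n^{3/2} )^{2/3} · X ≤ −∑_{j=1}^N e_j. -/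

import Mathlib

open Complex

noncomputable section Stmt14AuxSection
open Finset Filter

namespace Stmt14Aux

/-- product of two ℓ² sequences (one conjugated) is summable -/
lemma prod_summable {φ χ : ℤ → ℂ} (hφ : Summable fun m => ‖φ m‖ ^ 2)
    (hχ : Summable fun m => ‖χ m‖ ^ 2) :
    Summable fun m => φ m * (starRingEnd ℂ) (χ m) := by
  apply Summable.of_norm
  apply Summable.of_nonneg_of_le (fun m => norm_nonneg _)
    (fun m => ?_) ((hφ.add hχ).div_const 2)
  rw [norm_mul, RCLike.norm_conj]
  have h := sq_nonneg (‖φ m‖ - ‖χ m‖)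
  have := norm_nonneg (φ m); have := norm_nonneg (χ m)
  nlinarith

lemma cs_sqrt {ι : Type*} (s : Finset ι) (f g : ι → ℝ) (hf : ∀ i, 0 ≤ f i)
    (hg : ∀ i, 0 ≤ g i) {A B : ℝ} (hA : ∑ i ∈ s, f i ^ 2 ≤ A) (hB : ∑ i ∈ s, g i ^ 2 ≤ B) :
    ∑ i ∈ s, f i * g i ≤ Real.sqrt (A * B) := by
  have h0 : 0 ≤ ∑ i ∈ s, f i * g i :=
    Finset.sum_nonneg fun i _ => mul_nonneg (hf i) (hg i)
  have hA0 : (0:ℝ) ≤ A := le_trans (Finset.sum_nonneg fun i _ => sq_nonneg _) hA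
  have hB0 : (0:ℝ) ≤ B := le_trans (Finset.sum_nonneg fun i _ => sq_nonneg _) hB
  rw [Real.le_sqrt h0 (mul_nonneg hA0 hB0)]
  calc (∑ i ∈ s, f i * g i) ^ 2 ≤ (∑ i ∈ s, f i ^ 2) * ∑ i ∈ s, g i ^ 2 :=
        Finset.sum_mul_sq_le_sq_mul_sq s f g
    _ ≤ A * B := mul_le_mul hA hB (Finset.sum_nonneg fun i _ => sq_nonneg _) hA0

/-- split of a summable sum over ℤ at a point n -/
lemma int_split {g : ℤ → ℝ} (hg : Summable g) (n : ℤ) :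
    (∑' i : ℕ, g (n - i)) + (∑' i : ℕ, g (n + i)) = (∑' m : ℤ, g m) + g n := by
  have h : Summable fun m : ℤ => g (n + m) := by
    have := (Equiv.addLeft n).summable_iff (f := g)
    exact this.2 hg
  have hnat : Summable fun i : ℕ => g (n + (i : ℤ)) :=
    h.comp_injective (fun a b hab => by exact_mod_cast hab)
  have hneg : Summable fun i : ℕ => g (n + -((i : ℤ))) :=
    h.comp_injective (fun a b hab => by
      have : -(a : ℤ) = -(b : ℤ) := hab
      exact_mod_cast neg_inj.1 this)
  have hsplit := tsum_of_nat_of_neg_add_one (f := fun m : ℤ => g (n + m)) hnat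
      (h.comp_injective (fun a b hab => by
        have : -((a : ℤ) + 1) = -((b : ℤ) + 1) := hab
        have := neg_inj.1 this
        exact_mod_cast add_right_cancel this))
  have htot : (∑' m : ℤ, g (n + m)) = ∑' m : ℤ, g m := (Equiv.addLeft n).tsum_eq g
  have hleft : (∑' i : ℕ, g (n - i)) = g n + ∑' i : ℕ, g (n + -((i : ℤ) + 1)) := by
    have hinj : Function.Injective (fun i : ℕ => -(i : ℤ)) := fun a b hab => by
      have : -(a : ℤ) = -(b : ℤ) := hab
      exact_mod_cast neg_inj.1 this
    have hls : Summable fun i : ℕ => g (n - (i : ℤ)) := by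
      have h2 : Summable ((fun m : ℤ => g (n + m)) ∘ fun i : ℕ => -(i : ℤ)) :=
        h.comp_injective hinj
      exact h2.congr fun i => congrArg g (by simp [sub_eq_add_neg])
    calc (∑' i : ℕ, g (n - (i : ℤ)))
        = g (n - ((0 : ℕ) : ℤ)) + ∑' i : ℕ, g (n - (((i + 1 : ℕ)) : ℤ)) :=
          Summable.tsum_eq_zero_add hls
      _ = g n + ∑' i : ℕ, g (n + -((i : ℤ) + 1)) := by
          rw [show n - ((0 : ℕ) : ℤ) = n by norm_num]
          exact congrArg (fun z => g n + z)
            (tsum_congr fun i => congrArg g (by push_cast; ring))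
  rw [hleft, ← htot, hsplit]
  ring

/-- the final elementary algebra step -/
lemma alg {r Al Ar tl tr : ℝ} (hr : 0 ≤ r) (htl : 0 ≤ tl) (htr : 0 ≤ tr)
    (hAl : 0 ≤ Al) (hAr : 0 ≤ Ar)
    (h1 : r ^ 2 + tl ≤ 2 * Real.sqrt (Al * tl))
    (h2 : r ^ 2 + tr ≤ 2 * Real.sqrt (Ar * tr))
    (h3 : Al + Ar = r + r ^ 2) : r ^ 3 ≤ tl + tr := by
  have hq1 : (r ^ 2 + tl) ^ 2 ≤ 4 * (Al * tl) := by
    have hnn : 0 ≤ r ^ 2 + tl := by positivity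
    calc (r ^ 2 + tl) ^ 2 ≤ (2 * Real.sqrt (Al * tl)) ^ 2 := by
          apply pow_le_pow_left₀ hnn h1
      _ = 4 * (Al * tl) := by
          rw [mul_pow, Real.sq_sqrt (by positivity)]; ring
  have hq2 : (r ^ 2 + tr) ^ 2 ≤ 4 * (Ar * tr) := by
    have hnn : 0 ≤ r ^ 2 + tr := by positivity
    calc (r ^ 2 + tr) ^ 2 ≤ (2 * Real.sqrt (Ar * tr)) ^ 2 := by
          apply pow_le_pow_left₀ hnn h2
      _ = 4 * (Ar * tr) := by
          rw [mul_pow, Real.sq_sqrt (by positivity)]; ring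
  -- combine:  tr*(r²+tl)² + tl*(r²+tr)² ≤ 4 tl tr (Al+Ar) = 4 tl tr (r + r²)
  have hcomb : tr * (r ^ 2 + tl) ^ 2 + tl * (r ^ 2 + tr) ^ 2 ≤ 4 * (tl * tr) * (r + r ^ 2) := by
    have e1 : tr * (r ^ 2 + tl) ^ 2 ≤ 4 * (Al * tl) * tr :=
      by nlinarith [mul_le_mul_of_nonneg_left hq1 htr]
    have e2 : tl * (r ^ 2 + tr) ^ 2 ≤ 4 * (Ar * tr) * tl :=
      by nlinarith [mul_le_mul_of_nonneg_left hq2 htl]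
    calc tr * (r ^ 2 + tl) ^ 2 + tl * (r ^ 2 + tr) ^ 2
        ≤ 4 * (Al * tl) * tr + 4 * (Ar * tr) * tl := by linarith
      _ = 4 * (tl * tr) * (Al + Ar) := by ring
      _ = 4 * (tl * tr) * (r + r ^ 2) := by rw [h3]
  -- expand: r⁴(tl+tr) + tltr(tl+tr) ≤ 4 tl tr r
  have hkey : r ^ 4 * (tl + tr) + (tl * tr) * (tl + tr) ≤ 4 * (tl * tr) * r := by
    nlinarith [hcomb]
  -- conclude
  rcases eq_or_lt_of_le hr with hr0 | hrpos
  · simp [← hr0]; positivity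
  rcases eq_or_lt_of_le (add_nonneg htl htr) with hs0 | hspos
  · -- tl + tr = 0  ⇒ tl = 0 ⇒ r = 0, contradiction with r > 0 unless fine
    have htl0 : tl = 0 := by linarith
    have : (r ^ 2 + 0) ^ 2 ≤ 0 := by
      have := hq1; rw [htl0] at this; simpa using this
    nlinarith
  · -- s > 0 : r⁴ s ≤ 4 p r ≤ s² r  ⇒  r³ ≤ s
    have hp4 : 4 * (tl * tr) ≤ (tl + tr) ^ 2 := by nlinarith [sq_nonneg (tl - tr)]
    have h5 : r ^ 4 * (tl + tr) ≤ (tl + tr) ^ 2 * r := by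
      have : 4 * (tl * tr) * r ≤ (tl + tr) ^ 2 * r :=
        mul_le_mul_of_nonneg_right hp4 hr
      nlinarith [mul_nonneg (mul_nonneg htl htr) (add_nonneg htl htr)]
    -- divide by (tl+tr) * r > 0
    refine le_of_mul_le_mul_right ?_ (mul_pos hrpos hspos)
    calc r ^ 3 * (r * (tl + tr)) = r ^ 4 * (tl + tr) := by ring
      _ ≤ (tl + tr) ^ 2 * r := h5
      _ = (tl + tr) * (r * (tl + tr)) := by ring

lemma nsq (z : ℂ) : ‖z‖ ^ 2 = z.re ^ 2 + z.im ^ 2 := by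
  rw [Complex.sq_norm, Complex.normSq_apply]; ring

lemma exp1 (a b : ℂ) :
    ‖a‖ ^ 2 - ‖b‖ ^ 2 = 2 * (a * (starRingEnd ℂ) (a - b)).re - ‖a - b‖ ^ 2 := by
  simp only [nsq, Complex.mul_re, Complex.sub_re, Complex.sub_im,
    Complex.conj_re, Complex.conj_im]
  ring

lemma exp2 (a b : ℂ) :
    ‖a‖ ^ 2 - ‖b‖ ^ 2 = 2 * (b * (starRingEnd ℂ) (a - b)).re + ‖a - b‖ ^ 2 := by
  simp only [nsq, Complex.mul_re, Complex.sub_re, Complex.sub_im,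
    Complex.conj_re, Complex.conj_im]
  ring

lemma re_le_norm_mul (a c : ℂ) : (a * (starRingEnd ℂ) c).re ≤ ‖a‖ * ‖c‖ := by
  calc (a * (starRingEnd ℂ) c).re ≤ ‖a * (starRingEnd ℂ) c‖ := by
        exact Complex.re_le_norm _
    _ = ‖a‖ * ‖c‖ := by rw [norm_mul, RCLike.norm_conj]

lemma neg_re_le_norm_mul (a c : ℂ) : -(a * (starRingEnd ℂ) c).re ≤ ‖a‖ * ‖c‖ := by
  calc -(a * (starRingEnd ℂ) c).re = ((-a) * (starRingEnd ℂ) c).re := by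
        simp
    _ ≤ ‖-a‖ * ‖c‖ := re_le_norm_mul _ _
    _ = ‖a‖ * ‖c‖ := by rw [norm_neg]

lemma comp_sub {g : ℤ → ℝ} (h : Summable g) (n : ℤ) :
    Summable fun i : ℕ => g (n - i) := by
  have hinj : Function.Injective (fun i : ℕ => n - (i : ℤ)) := fun a b hab => by
    have : n - (a : ℤ) = n - (b : ℤ) := hab
    have h2 : (a : ℤ) = (b : ℤ) := by omega
    exact_mod_cast h2
  exact h.comp_injective hinj

lemma comp_add {g : ℤ → ℝ} (h : Summable g) (n : ℤ) :
    Summable fun i : ℕ => g (n + i) := by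
  have hinj : Function.Injective (fun i : ℕ => n + (i : ℤ)) := fun a b hab => by
    have : n + (a : ℤ) = n + (b : ℤ) := hab
    have h2 : (a : ℤ) = (b : ℤ) := by omega
    exact_mod_cast h2
  exact h.comp_injective hinj

lemma comp_add1 {g : ℤ → ℝ} (h : Summable g) (n : ℤ) :
    Summable fun i : ℕ => g (n + i + 1) := by
  have hinj : Function.Injective (fun i : ℕ => n + (i : ℤ) + 1) := fun a b hab => by
    have : n + (a : ℤ) + 1 = n + (b : ℤ) + 1 := hab
    have h2 : (a : ℤ) = (b : ℤ) := by omega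
    exact_mod_cast h2
  exact h.comp_injective hinj


/-- Key pointwise kinetic bound: if `F ∈ ℓ²(ℤ)`, `F n = r`, `∑ ‖F‖² = r`,
then `r³ ≤ ∑ ‖F m - F (m-1)‖²`. -/
lemma agmon (F : ℤ → ℂ) (hF : Summable fun m : ℤ => ‖F m‖ ^ 2) (n : ℤ) (r : ℝ)
    (hr : 0 ≤ r) (hFn : F n = (r : ℂ)) (htot : (∑' m : ℤ, ‖F m‖ ^ 2) = r)
    (hD : Summable fun m : ℤ => ‖F m - F (m - 1)‖ ^ 2) :
    r ^ 3 ≤ ∑' m : ℤ, ‖F m - F (m - 1)‖ ^ 2 := by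
  have hFn2 : ‖F n‖ ^ 2 = r ^ 2 := by
    rw [hFn, Complex.norm_real, Real.norm_eq_abs, _root_.sq_abs]
  have hgL := comp_sub hF n
  have hgR := comp_add hF n
  have hdL := comp_sub hD n
  have hdR := comp_add1 hD n
  have hdRtot := comp_add hD n
  set Al : ℝ := ∑' i : ℕ, ‖F (n - i)‖ ^ 2 with hAl_def
  set Ar : ℝ := ∑' i : ℕ, ‖F (n + i)‖ ^ 2 with hAr_def
  set tl : ℝ := ∑' i : ℕ, ‖F (n - i) - F (n - i - 1)‖ ^ 2 with htl_def
  set tr : ℝ := ∑' i : ℕ, ‖F (n + i + 1) - F (n + i + 1 - 1)‖ ^ 2 with htr_def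
  have hAl0 : 0 ≤ Al := tsum_nonneg fun i => sq_nonneg _
  have hAr0 : 0 ≤ Ar := tsum_nonneg fun i => sq_nonneg _
  have htl0 : 0 ≤ tl := tsum_nonneg fun i => sq_nonneg _
  have htr0 : 0 ≤ tr := tsum_nonneg fun i => sq_nonneg _
  -- left Agmon inequality
  have h1 : r ^ 2 + tl ≤ 2 * Real.sqrt (Al * tl) := by
    have hfin : ∀ K : ℕ, r ^ 2 - ‖F (n - K)‖ ^ 2
        + ∑ i ∈ range K, ‖F (n - i) - F (n - i - 1)‖ ^ 2 ≤ 2 * Real.sqrt (Al * tl) := by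
      intro K
      have tele : ∑ i ∈ range K, (‖F (n - i)‖ ^ 2 - ‖F (n - (i + 1 : ℕ))‖ ^ 2)
          = ‖F (n - (0 : ℕ))‖ ^ 2 - ‖F (n - K)‖ ^ 2 :=
        Finset.sum_range_sub' (fun i : ℕ => ‖F (n - i)‖ ^ 2) K
      have hterm : ∀ i : ℕ, ‖F (n - i)‖ ^ 2 - ‖F (n - (i + 1 : ℕ))‖ ^ 2
          = 2 * (F (n - i) * (starRingEnd ℂ) (F (n - i) - F (n - i - 1))).re
            - ‖F (n - i) - F (n - i - 1)‖ ^ 2 := by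
        intro i
        rw [show n - ((i + 1 : ℕ) : ℤ) = n - i - 1 by push_cast; ring]
        exact exp1 (F (n - i)) (F (n - i - 1))
      have tele2 : r ^ 2 - ‖F (n - K)‖ ^ 2
          + ∑ i ∈ range K, ‖F (n - i) - F (n - i - 1)‖ ^ 2
          = 2 * ∑ i ∈ range K, (F (n - i) * (starRingEnd ℂ) (F (n - i) - F (n - i - 1))).re := by
        have e := Finset.sum_congr rfl fun i (_ : i ∈ range K) => hterm i
        rw [tele, show n - ((0 : ℕ) : ℤ) = n by norm_num, hFn2] at e
        rw [Finset.sum_sub_distrib, ← Finset.mul_sum] at e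
        linarith
      rw [tele2]
      have hcs : ∑ i ∈ range K, (F (n - i) * (starRingEnd ℂ) (F (n - i) - F (n - i - 1))).re
          ≤ Real.sqrt (Al * tl) := by
        have hle : ∑ i ∈ range K, (F (n - i) * (starRingEnd ℂ) (F (n - i) - F (n - i - 1))).re
            ≤ ∑ i ∈ range K, ‖F (n - i)‖ * ‖F (n - i) - F (n - i - 1)‖ :=
          Finset.sum_le_sum fun i _ => re_le_norm_mul _ _
        refine le_trans hle (cs_sqrt (range K) (fun i => ‖F (n - i)‖)
          (fun i => ‖F (n - i) - F (n - i - 1)‖) (fun i => norm_nonneg _)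
          (fun i => norm_nonneg _) ?_ ?_)
        · exact Summable.sum_le_tsum (range K) (fun i _ => sq_nonneg _) hgL
        · exact Summable.sum_le_tsum (range K) (fun i _ => sq_nonneg _) hdL
      linarith
    have hlim : Tendsto (fun K : ℕ => r ^ 2 - ‖F (n - K)‖ ^ 2
        + ∑ i ∈ range K, ‖F (n - i) - F (n - i - 1)‖ ^ 2) atTop
        (nhds (r ^ 2 - 0 + tl)) :=
      (tendsto_const_nhds.sub hgL.tendsto_atTop_zero).add hdL.hasSum.tendsto_sum_nat
    have := le_of_tendsto hlim (Eventually.of_forall hfin)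
    linarith
  -- right Agmon inequality
  have h2 : r ^ 2 + tr ≤ 2 * Real.sqrt (Ar * tr) := by
    have hfin : ∀ K : ℕ, r ^ 2 - ‖F (n + K)‖ ^ 2
        + ∑ i ∈ range K, ‖F (n + i + 1) - F (n + i + 1 - 1)‖ ^ 2
        ≤ 2 * Real.sqrt (Ar * tr) := by
      intro K
      have tele : ∑ i ∈ range K, (‖F (n + i)‖ ^ 2 - ‖F (n + (i + 1 : ℕ))‖ ^ 2)
          = ‖F (n + (0 : ℕ))‖ ^ 2 - ‖F (n + K)‖ ^ 2 :=
        Finset.sum_range_sub' (fun i : ℕ => ‖F (n + i)‖ ^ 2) K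
      have hterm : ∀ i : ℕ, ‖F (n + i)‖ ^ 2 - ‖F (n + (i + 1 : ℕ))‖ ^ 2
          = -(2 * (F (n + i) * (starRingEnd ℂ) (F (n + i + 1) - F (n + i + 1 - 1))).re)
            - ‖F (n + i + 1) - F (n + i + 1 - 1)‖ ^ 2 := by
        intro i
        rw [show n + ((i + 1 : ℕ) : ℤ) = n + i + 1 by push_cast; ring,
          show n + (i : ℤ) + 1 - 1 = n + i by ring]
        have := exp2 (F (n + i + 1)) (F (n + i))
        linarith
      have e := Finset.sum_congr rfl fun i (_ : i ∈ range K) => hterm i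
      rw [tele, show n + ((0 : ℕ) : ℤ) = n by norm_num, hFn2] at e
      rw [Finset.sum_sub_distrib] at e
      have hb : ∑ x ∈ range K,
          -(2 * (F (n + x) * (starRingEnd ℂ) (F (n + x + 1) - F (n + x + 1 - 1))).re)
          ≤ 2 * Real.sqrt (Ar * tr) := by
        have hle : ∑ x ∈ range K,
            -(2 * (F (n + x) * (starRingEnd ℂ) (F (n + x + 1) - F (n + x + 1 - 1))).re)
            ≤ ∑ x ∈ range K, 2 * (‖F (n + x)‖ * ‖F (n + x + 1) - F (n + x + 1 - 1)‖) :=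
          Finset.sum_le_sum fun i _ => by
            have := neg_re_le_norm_mul (F (n + i)) (F (n + i + 1) - F (n + i + 1 - 1))
            linarith
        rw [← Finset.mul_sum] at hle
        have hcs := cs_sqrt (range K) (fun i => ‖F (n + i)‖)
          (fun i => ‖F (n + i + 1) - F (n + i + 1 - 1)‖) (fun i => norm_nonneg _)
          (fun i => norm_nonneg _)
          (Summable.sum_le_tsum (range K) (fun i _ => sq_nonneg _) hgR)
          (Summable.sum_le_tsum (range K) (fun i _ => sq_nonneg _) hdR)
        linarith
      linarith [e, hb]
    have hlim : Tendsto (fun K : ℕ => r ^ 2 - ‖F (n + K)‖ ^ 2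
        + ∑ i ∈ range K, ‖F (n + i + 1) - F (n + i + 1 - 1)‖ ^ 2) atTop
        (nhds (r ^ 2 - 0 + tr)) :=
      (tendsto_const_nhds.sub hgR.tendsto_atTop_zero).add hdR.hasSum.tendsto_sum_nat
    have := le_of_tendsto hlim (Eventually.of_forall hfin)
    linarith
  -- mass split
  have h3 : Al + Ar = r + r ^ 2 := by
    have := int_split hF n
    rw [htot, hFn2] at this
    exact this
  -- kinetic split
  have h4 : tl + tr = ∑' m : ℤ, ‖F m - F (m - 1)‖ ^ 2 := by
    have hsplit := int_split hD n
    have hzero : (∑' i : ℕ, ‖F (n + i) - F (n + i - 1)‖ ^ 2)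
        = ‖F n - F (n - 1)‖ ^ 2 + tr := by
      calc (∑' i : ℕ, ‖F (n + i) - F (n + i - 1)‖ ^ 2)
          = ‖F (n + ((0 : ℕ) : ℤ)) - F (n + ((0 : ℕ) : ℤ) - 1)‖ ^ 2
            + ∑' i : ℕ, ‖F (n + ((i + 1 : ℕ) : ℤ)) - F (n + ((i + 1 : ℕ) : ℤ) - 1)‖ ^ 2 :=
            Summable.tsum_eq_zero_add hdRtot
        _ = ‖F n - F (n - 1)‖ ^ 2 + tr := by
            rw [show n + ((0 : ℕ) : ℤ) = n by norm_num]
            congr 1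
            refine tsum_congr fun i => ?_
            rw [show n + ((i + 1 : ℕ) : ℤ) = n + i + 1 by push_cast; ring]
    rw [hzero] at hsplit
    linarith
  rw [← h4]
  exact alg hr htl0 htr0 hAl0 hAr0 h1 h2 h3


section Context

variable {N : ℕ} (ψ : Fin N → ℤ → ℂ)

/-- density -/
def rho (n : ℤ) : ℝ := ∑ j, ‖ψ j n‖ ^ 2

/-- kernel of the projection -/
def gam (n m : ℤ) : ℂ := ∑ j, ψ j n * (starRingEnd ℂ) (ψ j m)

lemma rho_nonneg (n : ℤ) : 0 ≤ rho ψ n :=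
  Finset.sum_nonneg fun j _ => sq_nonneg _

lemma mul_conj_self (z : ℂ) : z * (starRingEnd ℂ) z = ((‖z‖ ^ 2 : ℝ) : ℂ) := by
  rw [Complex.mul_conj, Complex.normSq_eq_norm_sq]

lemma conj_mul_self (z : ℂ) : (starRingEnd ℂ) z * z = ((‖z‖ ^ 2 : ℝ) : ℂ) := by
  rw [mul_comm]; exact mul_conj_self z

lemma gam_diag (n : ℤ) : gam ψ n n = ((rho ψ n : ℝ) : ℂ) := by
  unfold gam rho
  calc ∑ j, ψ j n * (starRingEnd ℂ) (ψ j n)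
      = ∑ j, ((‖ψ j n‖ ^ 2 : ℝ) : ℂ) := Finset.sum_congr rfl fun j _ => mul_conj_self _
    _ = (((∑ j, ‖ψ j n‖ ^ 2 : ℝ)) : ℂ) := by norm_cast

/-- Cauchy-Schwarz for the finite `j`-sums -/
lemma pair_norm_sq_le (v w : Fin N → ℂ) :
    ‖∑ j, v j * (starRingEnd ℂ) (w j)‖ ^ 2 ≤ (∑ j, ‖v j‖ ^ 2) * (∑ j, ‖w j‖ ^ 2) := by
  have h1 : ‖∑ j, v j * (starRingEnd ℂ) (w j)‖ ≤ ∑ j, ‖v j‖ * ‖w j‖ := by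
    refine le_trans (norm_sum_le _ _) (le_of_eq (Finset.sum_congr rfl fun j _ => ?_))
    rw [norm_mul, RCLike.norm_conj]
  calc ‖∑ j, v j * (starRingEnd ℂ) (w j)‖ ^ 2 ≤ (∑ j, ‖v j‖ * ‖w j‖) ^ 2 := by
        apply pow_le_pow_left₀ (norm_nonneg _) h1
    _ ≤ (∑ j, ‖v j‖ ^ 2) * (∑ j, ‖w j‖ ^ 2) :=
        Finset.sum_mul_sq_le_sq_mul_sq _ _ _

variable (hl2 : ∀ j, Summable fun n : ℤ => ‖ψ j n‖ ^ 2)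
variable (horth : ∀ j k, (∑' n : ℤ, ψ j n * (starRingEnd ℂ) (ψ k n)) = if j = k then 1 else 0)

include hl2 in
lemma rho_summable : Summable (rho ψ) := summable_sum fun j _ => hl2 j

include hl2 in
lemma summ_pair (j k : Fin N) : Summable fun m : ℤ => ψ j m * (starRingEnd ℂ) (ψ k m) :=
  prod_summable (hl2 j) (hl2 k)

include hl2 horth in
lemma norm_one (j : Fin N) : (∑' n : ℤ, ‖ψ j n‖ ^ 2) = 1 := by
  have h1 := horth j j
  rw [if_pos rfl] at h1
  have h2 : (∑' n : ℤ, ψ j n * (starRingEnd ℂ) (ψ j n))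
      = ((∑' n : ℤ, ‖ψ j n‖ ^ 2 : ℝ) : ℂ) := by
    calc (∑' n : ℤ, ψ j n * (starRingEnd ℂ) (ψ j n))
        = ∑' n : ℤ, ((‖ψ j n‖ ^ 2 : ℝ) : ℂ) := tsum_congr fun n => mul_conj_self _
      _ = ((∑' n : ℤ, ‖ψ j n‖ ^ 2 : ℝ) : ℂ) := by norm_cast
  rw [h2] at h1
  exact_mod_cast h1

/-- general expansion of the diagonal of a product kernel -/
lemma expand_summable (v : Fin N → ℂ) (φ : Fin N → ℤ → ℂ)
    (hφ : ∀ j, Summable fun m : ℤ => ‖φ j m‖ ^ 2) :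
    Summable fun m : ℤ => (∑ j, v j * (starRingEnd ℂ) (φ j m))
      * (starRingEnd ℂ) (∑ k, v k * (starRingEnd ℂ) (φ k m)) := by
  apply Summable.of_norm
  have hbound : ∀ m : ℤ, ‖(∑ j, v j * (starRingEnd ℂ) (φ j m))
      * (starRingEnd ℂ) (∑ k, v k * (starRingEnd ℂ) (φ k m))‖
      ≤ (∑ j, ‖v j‖ ^ 2) * (∑ j, ‖φ j m‖ ^ 2) := by
    intro m
    rw [norm_mul, RCLike.norm_conj, ← sq]
    exact pair_norm_sq_le v _
  exact Summable.of_nonneg_of_le (fun m => norm_nonneg _) hbound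
    ((summable_sum fun j _ => hφ j).mul_left _)

omit hl2 in
lemma expand_tsum (v : Fin N → ℂ) (φ : Fin N → ℤ → ℂ)
    (hφ : ∀ j, Summable fun m : ℤ => ‖φ j m‖ ^ 2) :
    (∑' m : ℤ, (∑ j, v j * (starRingEnd ℂ) (φ j m))
      * (starRingEnd ℂ) (∑ k, v k * (starRingEnd ℂ) (φ k m)))
      = ∑ j, ∑ k, (v j * (starRingEnd ℂ) (v k)) * ∑' m : ℤ, (starRingEnd ℂ) (φ j m) * φ k m := by
  have hpt : ∀ m : ℤ, (∑ j, v j * (starRingEnd ℂ) (φ j m))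
      * (starRingEnd ℂ) (∑ k, v k * (starRingEnd ℂ) (φ k m))
      = ∑ j, ∑ k, (v j * (starRingEnd ℂ) (v k)) * ((starRingEnd ℂ) (φ j m) * φ k m) := by
    intro m
    rw [map_sum, Finset.sum_mul_sum]
    refine Finset.sum_congr rfl fun j _ => Finset.sum_congr rfl fun k _ => ?_
    simp only [map_mul, RingHomCompTriple.comp_apply, Complex.conj_conj, RingHom.id_apply]
    ring
  have hsum : ∀ (j k : Fin N), Summable fun m : ℤ =>
      (v j * (starRingEnd ℂ) (v k)) * ((starRingEnd ℂ) (φ j m) * φ k m) := by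
    intro j k
    apply Summable.mul_left
    have := prod_summable (hφ k) (hφ j)
    exact (this.congr fun m => by ring).congr fun m => rfl
  calc (∑' m : ℤ, (∑ j, v j * (starRingEnd ℂ) (φ j m))
      * (starRingEnd ℂ) (∑ k, v k * (starRingEnd ℂ) (φ k m)))
      = ∑' m : ℤ, ∑ j, ∑ k, (v j * (starRingEnd ℂ) (v k))
          * ((starRingEnd ℂ) (φ j m) * φ k m) := tsum_congr hpt
    _ = ∑ j, ∑' m : ℤ, ∑ k, (v j * (starRingEnd ℂ) (v k))
          * ((starRingEnd ℂ) (φ j m) * φ k m) :=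
        Summable.tsum_finsetSum fun j _ => summable_sum fun k _ => hsum j k
    _ = ∑ j, ∑ k, ∑' m : ℤ, (v j * (starRingEnd ℂ) (v k))
          * ((starRingEnd ℂ) (φ j m) * φ k m) :=
        Finset.sum_congr rfl fun j _ => Summable.tsum_finsetSum fun k _ => hsum j k
    _ = ∑ j, ∑ k, (v j * (starRingEnd ℂ) (v k)) * ∑' m : ℤ, (starRingEnd ℂ) (φ j m) * φ k m :=
        Finset.sum_congr rfl fun j _ => Finset.sum_congr rfl fun k _ => tsum_mul_left


lemma norm_sub_sq_le (a b : ℂ) : ‖a - b‖ ^ 2 ≤ 2 * ‖a‖ ^ 2 + 2 * ‖b‖ ^ 2 := by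
  have h1 := norm_sub_le a b
  have h2 := pow_le_pow_left₀ (norm_nonneg (a - b)) h1 2
  nlinarith [sq_nonneg (‖a‖ - ‖b‖)]

omit hl2 horth in
lemma shiftm1_summable {g : ℤ → ℝ} (h : Summable g) : Summable fun m : ℤ => g (m - 1) :=
  h.comp_injective (fun x y hxy => by omega)

/-- difference sequence -/
def dps (j : Fin N) (m : ℤ) : ℂ := ψ j m - ψ j (m - 1)

/-- kinetic energy of `ψ j` -/
def Tj (j : Fin N) : ℝ := ∑' m : ℤ, ‖dps ψ j m‖ ^ 2

/-- kinetic matrix -/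
def Ckin (j k : Fin N) : ℂ := ∑' m : ℤ, (starRingEnd ℂ) (dps ψ j m) * dps ψ k m

/-- diagonal kinetic density of the kernel -/
def tker (n : ℤ) : ℝ := ∑' m : ℤ, ‖gam ψ n m - gam ψ n (m - 1)‖ ^ 2

include hl2 in
lemma dps_sq_summable (j : Fin N) : Summable fun m : ℤ => ‖dps ψ j m‖ ^ 2 := by
  apply Summable.of_nonneg_of_le (fun m => sq_nonneg _) (fun m => norm_sub_sq_le _ _)
  exact ((hl2 j).mul_left 2).add ((shiftm1_summable (hl2 j)).mul_left 2)

include hl2 in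
lemma gam_sq_summable (n : ℤ) : Summable fun m : ℤ => ‖gam ψ n m‖ ^ 2 := by
  apply Summable.of_nonneg_of_le (fun m => sq_nonneg _) (fun m => ?_)
    ((rho_summable ψ hl2).mul_left (rho ψ n))
  simpa [gam, rho] using pair_norm_sq_le (fun j => ψ j n) (fun j => ψ j m)

omit horth in
lemma gD_expand (n m : ℤ) : gam ψ n m - gam ψ n (m - 1)
    = ∑ j, ψ j n * (starRingEnd ℂ) (dps ψ j m) := by
  unfold gam dps
  rw [← Finset.sum_sub_distrib]
  exact Finset.sum_congr rfl fun j _ => by rw [map_sub, mul_sub]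

include hl2 in
lemma gD_sq_summable (n : ℤ) :
    Summable fun m : ℤ => ‖gam ψ n m - gam ψ n (m - 1)‖ ^ 2 := by
  apply Summable.of_nonneg_of_le (fun m => sq_nonneg _) (fun m => ?_)
    (((summable_sum fun j (_ : j ∈ Finset.univ) => dps_sq_summable ψ hl2 j)).mul_left (rho ψ n))
  rw [gD_expand]
  simpa [rho] using pair_norm_sq_le (fun j => ψ j n) (fun j => dps ψ j m)

include hl2 horth in
lemma gam_tsum_sq (n : ℤ) : (∑' m : ℤ, ‖gam ψ n m‖ ^ 2) = rho ψ n := by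
  have h2 : ∀ j k : Fin N, (∑' m : ℤ, (starRingEnd ℂ) (ψ j m) * ψ k m)
      = if k = j then 1 else 0 := by
    intro j k
    rw [← horth k j]
    exact tsum_congr fun m => by ring
  have h1 : ((∑' m : ℤ, ‖gam ψ n m‖ ^ 2 : ℝ) : ℂ) = ((rho ψ n : ℝ) : ℂ) := by
    calc ((∑' m : ℤ, ‖gam ψ n m‖ ^ 2 : ℝ) : ℂ)
        = ∑' m : ℤ, ((‖gam ψ n m‖ ^ 2 : ℝ) : ℂ) := by norm_cast
      _ = ∑' m : ℤ, gam ψ n m * (starRingEnd ℂ) (gam ψ n m) :=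
          tsum_congr fun m => (mul_conj_self _).symm
      _ = ∑ j, ∑ k, ((fun j => ψ j n) j * (starRingEnd ℂ) ((fun j => ψ j n) k))
            * ∑' m : ℤ, (starRingEnd ℂ) (ψ j m) * ψ k m :=
          expand_tsum (fun j => ψ j n) ψ hl2
      _ = ∑ j, ψ j n * (starRingEnd ℂ) (ψ j n) := by
          simp only [h2, mul_ite, mul_one, mul_zero]
          simp
      _ = ((rho ψ n : ℝ) : ℂ) := gam_diag ψ n
  exact_mod_cast h1

include hl2 horth in
lemma rho_cubed_le (n : ℤ) : rho ψ n ^ 3 ≤ tker ψ n := by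
  unfold tker
  exact agmon (gam ψ n) (gam_sq_summable ψ hl2 n) n (rho ψ n) (rho_nonneg ψ n)
    (gam_diag ψ n) (gam_tsum_sq ψ hl2 horth n) (gD_sq_summable ψ hl2 n)

include hl2 in
lemma tker_ofReal (n : ℤ) : ((tker ψ n : ℝ) : ℂ)
    = ∑ j, ∑ k, (ψ j n * (starRingEnd ℂ) (ψ k n)) * Ckin ψ j k := by
  unfold tker Ckin
  calc ((∑' m : ℤ, ‖gam ψ n m - gam ψ n (m - 1)‖ ^ 2 : ℝ) : ℂ)
      = ∑' m : ℤ, ((‖gam ψ n m - gam ψ n (m - 1)‖ ^ 2 : ℝ) : ℂ) := by norm_cast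
    _ = ∑' m : ℤ, (∑ j, ψ j n * (starRingEnd ℂ) (dps ψ j m))
          * (starRingEnd ℂ) (∑ k, ψ k n * (starRingEnd ℂ) (dps ψ k m)) := by
        refine tsum_congr fun m => ?_
        rw [← gD_expand, mul_conj_self]
    _ = ∑ j, ∑ k, (ψ j n * (starRingEnd ℂ) (ψ k n))
          * ∑' m : ℤ, (starRingEnd ℂ) (dps ψ j m) * dps ψ k m :=
        expand_tsum (fun j => ψ j n) (dps ψ) (dps_sq_summable ψ hl2)

include hl2 in
lemma tker_summable : Summable (tker ψ) := by
  have hc : Summable fun n : ℤ => ∑ j, ∑ k, (ψ j n * (starRingEnd ℂ) (ψ k n)) * Ckin ψ j k :=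
    summable_sum fun j _ => summable_sum fun k _ => (summ_pair ψ hl2 j k).mul_right _
  have h2 : Summable fun n : ℤ => ((tker ψ n : ℝ) : ℂ) :=
    hc.congr fun n => (tker_ofReal ψ hl2 n).symm
  exact (RCLike.summable_ofReal ℂ).1 h2

include hl2 in
lemma Ckin_diag (j : Fin N) : Ckin ψ j j = ((Tj ψ j : ℝ) : ℂ) := by
  unfold Ckin Tj
  calc (∑' m : ℤ, (starRingEnd ℂ) (dps ψ j m) * dps ψ j m)
      = ∑' m : ℤ, ((‖dps ψ j m‖ ^ 2 : ℝ) : ℂ) := tsum_congr fun m => conj_mul_self _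
    _ = ((∑' m : ℤ, ‖dps ψ j m‖ ^ 2 : ℝ) : ℂ) := by norm_cast

include hl2 horth in
lemma tker_total : (∑' n : ℤ, tker ψ n) = ∑ j, Tj ψ j := by
  have key : ((∑' n : ℤ, tker ψ n : ℝ) : ℂ) = ((∑ j, Tj ψ j : ℝ) : ℂ) := by
    calc ((∑' n : ℤ, tker ψ n : ℝ) : ℂ)
        = ∑' n : ℤ, ((tker ψ n : ℝ) : ℂ) := by norm_cast
      _ = ∑' n : ℤ, ∑ j, ∑ k, (ψ j n * (starRingEnd ℂ) (ψ k n)) * Ckin ψ j k :=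
          tsum_congr fun n => tker_ofReal ψ hl2 n
      _ = ∑ j, ∑' n : ℤ, ∑ k, (ψ j n * (starRingEnd ℂ) (ψ k n)) * Ckin ψ j k :=
          Summable.tsum_finsetSum fun j _ => summable_sum fun k _ => (summ_pair ψ hl2 j k).mul_right _
      _ = ∑ j, ∑ k, ∑' n : ℤ, (ψ j n * (starRingEnd ℂ) (ψ k n)) * Ckin ψ j k :=
          Finset.sum_congr rfl fun j _ => Summable.tsum_finsetSum fun k _ => (summ_pair ψ hl2 j k).mul_right _
      _ = ∑ j, ∑ k, (if j = k then (1 : ℂ) else 0) * Ckin ψ j k := by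
          refine Finset.sum_congr rfl fun j _ => Finset.sum_congr rfl fun k _ => ?_
          rw [tsum_mul_right, horth j k]
      _ = ∑ j, Ckin ψ j j := by
          simp only [ite_mul, one_mul, zero_mul]
          simp
      _ = ∑ j, ((Tj ψ j : ℝ) : ℂ) :=
          Finset.sum_congr rfl fun j _ => Ckin_diag ψ hl2 j
      _ = ((∑ j, Tj ψ j : ℝ) : ℂ) := by norm_cast
  exact_mod_cast key

include hl2 horth in
lemma rho3_summable : Summable fun n : ℤ => rho ψ n ^ 3 :=
  Summable.of_nonneg_of_le (fun n => pow_nonneg (rho_nonneg ψ n) 3)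
    (fun n => rho_cubed_le ψ hl2 horth n) (tker_summable ψ hl2)

include hl2 horth in
lemma sum_rho3_le : (∑' n : ℤ, rho ψ n ^ 3) ≤ ∑ j, Tj ψ j := by
  rw [← tker_total ψ hl2 horth]
  exact Summable.tsum_le_tsum (fun n => rho_cubed_le ψ hl2 horth n)
    (rho3_summable ψ hl2 horth) (tker_summable ψ hl2)


include hl2 horth in
lemma eigen (b : ℤ → ℝ) (e : Fin N → ℝ) (j : Fin N)
    (heig : ∀ n : ℤ,
      (2 * ψ j n - ψ j (n + 1) - ψ j (n - 1)) - (b n : ℂ) * ψ j n = -(e j : ℂ) * ψ j n) :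
    (Summable fun n : ℤ => b n * ‖ψ j n‖ ^ 2) ∧
      Tj ψ j = (∑' n : ℤ, b n * ‖ψ j n‖ ^ 2) - e j := by
  have hsu : Summable fun n : ℤ => ‖ψ j n‖ ^ 2 := hl2 j
  have hsm : Summable fun n : ℤ => ‖ψ j (n - 1)‖ ^ 2 :=
    hsu.comp_injective (fun x y hxy => by omega)
  have hsp : Summable fun n : ℤ => ‖ψ j (n + 1)‖ ^ 2 :=
    hsu.comp_injective (fun x y hxy => by omega)
  have hP0 : Summable fun n : ℤ => ψ j n * (starRingEnd ℂ) (ψ j n) := prod_summable hsu hsu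
  have hP1 : Summable fun n : ℤ => ψ j (n + 1) * (starRingEnd ℂ) (ψ j n) :=
    prod_summable hsp hsu
  have hPm : Summable fun n : ℤ => ψ j (n - 1) * (starRingEnd ℂ) (ψ j n) :=
    prod_summable hsm hsu
  have hPd : Summable fun n : ℤ => ψ j n * (starRingEnd ℂ) (ψ j (n - 1)) :=
    prod_summable hsu hsm
  have hPm1 : Summable fun n : ℤ => ψ j (n - 1) * (starRingEnd ℂ) (ψ j (n - 1)) :=
    prod_summable hsm hsm
  have hS0 : (∑' n : ℤ, ψ j n * (starRingEnd ℂ) (ψ j n)) = 1 := by simpa using horth j j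
  -- pointwise eigen identity multiplied by conj
  have q_id : ∀ n : ℤ, (b n : ℂ) * (ψ j n * (starRingEnd ℂ) (ψ j n))
      = 2 * (ψ j n * (starRingEnd ℂ) (ψ j n))
        - ψ j (n + 1) * (starRingEnd ℂ) (ψ j n)
        - ψ j (n - 1) * (starRingEnd ℂ) (ψ j n)
        + (e j : ℂ) * (ψ j n * (starRingEnd ℂ) (ψ j n)) := by
    intro n
    linear_combination (-(starRingEnd ℂ) (ψ j n)) * heig n
  have hQ : Summable fun n : ℤ => (b n : ℂ) * (ψ j n * (starRingEnd ℂ) (ψ j n)) := by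
    refine Summable.congr ?_ fun n => (q_id n).symm
    exact (((hP0.mul_left 2).sub hP1).sub hPm).add (hP0.mul_left ((e j : ℂ)))
  have hbr : Summable fun n : ℤ => b n * ‖ψ j n‖ ^ 2 := by
    have hQ' : Summable fun n : ℤ => ((b n * ‖ψ j n‖ ^ 2 : ℝ) : ℂ) :=
      hQ.congr fun n => by rw [mul_conj_self]; push_cast; ring
    exact (RCLike.summable_ofReal ℂ).1 hQ'
  refine ⟨hbr, ?_⟩
  -- sums
  set Sd : ℂ := ∑' n : ℤ, ψ j n * (starRingEnd ℂ) (ψ j (n - 1)) with hSd_def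
  have hS1 : (∑' n : ℤ, ψ j (n + 1) * (starRingEnd ℂ) (ψ j n)) = Sd := by
    rw [hSd_def, ← (Equiv.subRight (1 : ℤ)).tsum_eq
      (fun n : ℤ => ψ j (n + 1) * (starRingEnd ℂ) (ψ j n))]
    exact tsum_congr fun n => by
      simp only [Equiv.subRight_apply]
      rw [show n - 1 + 1 = n by ring]
  have hSm : (∑' n : ℤ, ψ j (n - 1) * (starRingEnd ℂ) (ψ j n)) = (starRingEnd ℂ) Sd := by
    rw [hSd_def, RCLike.conj_tsum]
    exact tsum_congr fun n => by
      simp only [map_mul, Complex.conj_conj]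
      ring
  have hSm1 : (∑' n : ℤ, ψ j (n - 1) * (starRingEnd ℂ) (ψ j (n - 1))) = 1 := by
    rw [← hS0, ← (Equiv.subRight (1 : ℤ)).tsum_eq
      (fun n : ℤ => ψ j n * (starRingEnd ℂ) (ψ j n))]
    exact tsum_congr fun n => by simp only [Equiv.subRight_apply]
  -- eigen equation summed
  have hsum_eig : ((∑' n : ℤ, b n * ‖ψ j n‖ ^ 2 : ℝ) : ℂ)
      = 2 - Sd - (starRingEnd ℂ) Sd + (e j : ℂ) := by
    have e1 : ((∑' n : ℤ, b n * ‖ψ j n‖ ^ 2 : ℝ) : ℂ)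
        = ∑' n : ℤ, (b n : ℂ) * (ψ j n * (starRingEnd ℂ) (ψ j n)) := by
      calc ((∑' n : ℤ, b n * ‖ψ j n‖ ^ 2 : ℝ) : ℂ)
          = ∑' n : ℤ, ((b n * ‖ψ j n‖ ^ 2 : ℝ) : ℂ) := by norm_cast
        _ = ∑' n : ℤ, (b n : ℂ) * (ψ j n * (starRingEnd ℂ) (ψ j n)) :=
            tsum_congr fun n => by rw [mul_conj_self]; push_cast; ring
    rw [e1, tsum_congr q_id]
    rw [Summable.tsum_add ((((hP0.mul_left 2).sub hP1).sub hPm)) (hP0.mul_left ((e j : ℂ)))]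
    rw [Summable.tsum_sub ((hP0.mul_left 2).sub hP1) hPm]
    rw [Summable.tsum_sub (hP0.mul_left 2) hP1]
    rw [tsum_mul_left, tsum_mul_left, hS0, hS1, hSm]
    ring
  -- kinetic energy expanded
  have hTj : ((Tj ψ j : ℝ) : ℂ) = 2 - Sd - (starRingEnd ℂ) Sd := by
    have e2 : ((Tj ψ j : ℝ) : ℂ)
        = ∑' n : ℤ, (dps ψ j n) * (starRingEnd ℂ) (dps ψ j n) := by
      calc ((Tj ψ j : ℝ) : ℂ) = ∑' n : ℤ, ((‖dps ψ j n‖ ^ 2 : ℝ) : ℂ) := by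
            unfold Tj; norm_cast
        _ = ∑' n : ℤ, (dps ψ j n) * (starRingEnd ℂ) (dps ψ j n) :=
            tsum_congr fun n => (mul_conj_self _).symm
    have e3 : ∀ n : ℤ, (dps ψ j n) * (starRingEnd ℂ) (dps ψ j n)
        = (ψ j n * (starRingEnd ℂ) (ψ j n) + ψ j (n - 1) * (starRingEnd ℂ) (ψ j (n - 1)))
          - (ψ j n * (starRingEnd ℂ) (ψ j (n - 1)) + ψ j (n - 1) * (starRingEnd ℂ) (ψ j n)) := by
      intro n
      unfold dps
      rw [map_sub]
      ring
    rw [e2, tsum_congr e3, Summable.tsum_sub (hP0.add hPm1) (hPd.add hPm),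
      Summable.tsum_add hP0 hPm1, Summable.tsum_add hPd hPm, hS0, hSm1, hSm]
    ring
  have final : ((Tj ψ j : ℝ) : ℂ)
      = (((∑' n : ℤ, b n * ‖ψ j n‖ ^ 2) - e j : ℝ) : ℂ) := by
    rw [hTj, Complex.ofReal_sub, hsum_eig]
    ring
  exact_mod_cast final

end Context

lemma rpow_third_cube {a : ℝ} (ha : 0 ≤ a) : (a ^ ((1 : ℝ) / 3)) ^ 3 = a := by
  rw [← Real.rpow_natCast (a ^ ((1 : ℝ) / 3)) 3, ← Real.rpow_mul ha]
  norm_num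

lemma rpow_third_sq {a : ℝ} (ha : 0 ≤ a) : (a ^ ((1 : ℝ) / 3)) ^ 2 = a ^ ((2 : ℝ) / 3) := by
  rw [← Real.rpow_natCast (a ^ ((1 : ℝ) / 3)) 2, ← Real.rpow_mul ha]
  norm_num

lemma young_pt (x p lam : ℝ) (hx : 0 ≤ x) (hp : 0 ≤ p) (hlam : 0 < lam) :
    x * p ≤ 2 / (3 * lam) * x ^ (3 / 2 : ℝ) + lam ^ 2 / 3 * p ^ 3 := by
  set c := Real.sqrt x with hc_def
  have hc : 0 ≤ c := Real.sqrt_nonneg x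
  have hc2 : c ^ 2 = x := Real.sq_sqrt hx
  have hc3 : c ^ 3 = x ^ (3 / 2 : ℝ) := by
    rw [hc_def, Real.sqrt_eq_rpow, ← Real.rpow_natCast (x ^ (1 / (2 : ℝ))) 3,
      ← Real.rpow_mul hx]
    norm_num
  rw [← hc3, ← hc2]
  have key : 3 * lam * (c ^ 2 * p) ≤ 3 * lam * (2 / (3 * lam) * c ^ 3 + lam ^ 2 / 3 * p ^ 3) := by
    have expand : 3 * lam * (2 / (3 * lam) * c ^ 3 + lam ^ 2 / 3 * p ^ 3)
        = 2 * c ^ 3 + lam ^ 3 * p ^ 3 := by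
      field_simp
    rw [expand]
    nlinarith [mul_nonneg (sq_nonneg (c - lam * p))
      (by positivity : (0 : ℝ) ≤ 2 * c + lam * p)]
  exact le_of_mul_le_mul_left key (by positivity)

lemma holder (bb pf : ℤ → ℝ) (hb0 : ∀ n, 0 ≤ bb n) (hp0 : ∀ n, 0 ≤ pf n)
    (hb : Summable fun n : ℤ => bb n ^ (3 / 2 : ℝ)) (hp3 : Summable fun n : ℤ => pf n ^ 3)
    (hbr : Summable fun n : ℤ => bb n * pf n) :
    (∑' n : ℤ, bb n * pf n)
      ≤ (∑' n : ℤ, bb n ^ (3 / 2 : ℝ)) ^ ((2 : ℝ) / 3) * (∑' n : ℤ, pf n ^ 3) ^ ((1 : ℝ) / 3) := by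
  set B := ∑' n : ℤ, bb n ^ (3 / 2 : ℝ) with hB_def
  set Y := ∑' n : ℤ, pf n ^ 3 with hY_def
  have hB0 : 0 ≤ B := tsum_nonneg fun n => Real.rpow_nonneg (hb0 n) _
  have hY0 : 0 ≤ Y := tsum_nonneg fun n => pow_nonneg (hp0 n) 3
  have fam : ∀ lam : ℝ, 0 < lam →
      (∑' n : ℤ, bb n * pf n) ≤ 2 / (3 * lam) * B + lam ^ 2 / 3 * Y := by
    intro lam hlam
    calc (∑' n : ℤ, bb n * pf n)
        ≤ ∑' n : ℤ, (2 / (3 * lam) * bb n ^ (3 / 2 : ℝ) + lam ^ 2 / 3 * pf n ^ 3) :=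
          Summable.tsum_le_tsum (fun n => young_pt (bb n) (pf n) lam (hb0 n) (hp0 n) hlam) hbr
            ((hb.mul_left _).add (hp3.mul_left _))
      _ = 2 / (3 * lam) * B + lam ^ 2 / 3 * Y := by
          rw [Summable.tsum_add (hb.mul_left _) (hp3.mul_left _), tsum_mul_left, tsum_mul_left]
  by_cases hYz : Y = 0
  · have hpz : ∀ n, pf n = 0 := by
      intro n
      have h1 : pf n ^ 3 ≤ 0 := by
        rw [← hYz]
        exact Summable.le_tsum hp3 n fun m _ => pow_nonneg (hp0 m) 3
      have h2 : 0 ≤ pf n ^ 3 := pow_nonneg (hp0 n) 3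
      have h3 : pf n ^ 3 = 0 := le_antisymm h1 h2
      exact pow_eq_zero_iff (by norm_num) |>.1 h3
    have hz : (∑' n : ℤ, bb n * pf n) = 0 := by
      rw [tsum_congr fun n => by rw [hpz n, mul_zero]]
      exact tsum_zero
    rw [hz, hYz, Real.zero_rpow (by norm_num), mul_zero]
  · have hYpos : 0 < Y := lt_of_le_of_ne hY0 (Ne.symm hYz)
    by_cases hBz : B = 0
    · have hbz : ∀ n, bb n = 0 := by
        intro n
        by_contra hne
        have hbpos : 0 < bb n := lt_of_le_of_ne (hb0 n) (Ne.symm hne)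
        have h1 : bb n ^ (3 / 2 : ℝ) ≤ 0 := by
          rw [← hBz]
          exact Summable.le_tsum hb n fun m _ => Real.rpow_nonneg (hb0 m) _
        have h2 := Real.rpow_pos_of_pos hbpos (3 / 2 : ℝ)
        linarith
      have hz : (∑' n : ℤ, bb n * pf n) = 0 := by
        rw [tsum_congr fun n => by rw [hbz n, zero_mul]]
        exact tsum_zero
      rw [hz, hBz, Real.zero_rpow (by norm_num), zero_mul]
    · have hBpos : 0 < B := lt_of_le_of_ne hB0 (Ne.symm hBz)
      set t := B ^ ((1 : ℝ) / 3) with ht_def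
      set s := Y ^ ((1 : ℝ) / 3) with hs_def
      have ht : 0 < t := Real.rpow_pos_of_pos hBpos _
      have hs : 0 < s := Real.rpow_pos_of_pos hYpos _
      have ht3 : t ^ 3 = B := rpow_third_cube hB0
      have hs3 : s ^ 3 = Y := rpow_third_cube hY0
      have ht2 : t ^ 2 = B ^ ((2 : ℝ) / 3) := rpow_third_sq hB0
      have hlampos : 0 < t / s := div_pos ht hs
      have heval : 2 / (3 * (t / s)) * B + (t / s) ^ 2 / 3 * Y = B ^ ((2 : ℝ) / 3) * s := by
        rw [← ht2, ← ht3, ← hs3]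
        field_simp
        ring
      calc (∑' n : ℤ, bb n * pf n) ≤ 2 / (3 * (t / s)) * B + (t / s) ^ 2 / 3 * Y :=
            fam (t / s) hlampos
        _ = B ^ ((2 : ℝ) / 3) * s := heval


end Stmt14Aux

end Stmt14AuxSection

open Stmt14Aux in
theorem stmt_14
    (b : ℤ → ℝ) (hb0 : ∀ n, 0 ≤ b n)
    (hb : Summable fun n : ℤ => b n ^ (3 / 2 : ℝ))
    (N : ℕ) (ψ : Fin N → ℤ → ℂ) (e : Fin N → ℝ)
    (he : ∀ j, 0 < e j)
    (hl2 : ∀ j, Summable fun n : ℤ => ‖ψ j n‖ ^ 2)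
    (horth : ∀ j k, (∑' n : ℤ, ψ j n * (starRingEnd ℂ) (ψ k n)) = if j = k then 1 else 0)
    (heig : ∀ j, ∀ n : ℤ,
      (2 * ψ j n - ψ j (n + 1) - ψ j (n - 1)) - (b n : ℂ) * ψ j n = -(e j : ℂ) * ψ j n) :
    let X : ℝ := (∑' n : ℤ, (∑ j : Fin N, ‖ψ j n‖ ^ 2) ^ 3) ^ ((1 : ℝ) / 3)
    X ^ 3 - (∑' n : ℤ, b n ^ (3 / 2 : ℝ)) ^ ((2 : ℝ) / 3) * X ≤ -∑ j : Fin N, e j := by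
  intro X
  have hXdef : X = (∑' n : ℤ, (∑ j : Fin N, ‖ψ j n‖ ^ 2) ^ 3) ^ ((1 : ℝ) / 3) := rfl
  have hrho_fun : (fun n : ℤ => (∑ j : Fin N, ‖ψ j n‖ ^ 2) ^ 3)
      = fun n : ℤ => rho ψ n ^ 3 := rfl
  -- eigen identities
  have hE := fun j : Fin N => eigen ψ hl2 horth b e j (heig j)
  -- summability of b * rho
  have hbr : Summable fun n : ℤ => b n * rho ψ n := by
    have h1 : Summable fun n : ℤ => ∑ j : Fin N, b n * ‖ψ j n‖ ^ 2 :=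
      summable_sum fun j _ => (hE j).1
    exact h1.congr fun n => by rw [← Finset.mul_sum]; rfl
  -- total kinetic energy identity
  have hsum_e : ∑ j : Fin N, Tj ψ j = (∑' n : ℤ, b n * rho ψ n) - ∑ j : Fin N, e j := by
    have h1 : ∑ j : Fin N, Tj ψ j
        = ∑ j : Fin N, ((∑' n : ℤ, b n * ‖ψ j n‖ ^ 2) - e j) :=
      Finset.sum_congr rfl fun j _ => (hE j).2
    have h2 : ∑ j : Fin N, (∑' n : ℤ, b n * ‖ψ j n‖ ^ 2)
        = ∑' n : ℤ, b n * rho ψ n := by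
      rw [← Summable.tsum_finsetSum fun j _ => (hE j).1]
      exact tsum_congr fun n => by rw [← Finset.mul_sum]; rfl
    rw [h1, Finset.sum_sub_distrib, h2]
  -- kinetic inequality
  have hkin : (∑' n : ℤ, rho ψ n ^ 3) ≤ ∑ j : Fin N, Tj ψ j := sum_rho3_le ψ hl2 horth
  -- Hölder
  have hhold := holder b (rho ψ) hb0 (rho_nonneg ψ) hb (rho3_summable ψ hl2 horth) hbr
  -- assemble
  set B : ℝ := ∑' n : ℤ, b n ^ (3 / 2 : ℝ) with hB_def
  set Y : ℝ := ∑' n : ℤ, rho ψ n ^ 3 with hY_def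
  have hY0 : 0 ≤ Y := tsum_nonneg fun n => pow_nonneg (rho_nonneg ψ n) 3
  have hXY : X = Y ^ ((1 : ℝ) / 3) := by
    rw [hXdef, hY_def, hrho_fun]
  have hX3 : X ^ 3 = Y := by rw [hXY]; exact rpow_third_cube hY0
  rw [hX3, hXY]
  linarith [hhold, hkin, hsum_e]
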